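/- Let (E_i)_{i≥1} be independent identically distributed random variables, each exponentially distributed with rate 1, on a probability space. Set S_0 = 0, S_k = E_1 + ⋯ + E_k for k ≥ 1, and define the Poisson process N(t) = #{k ≥ 1 : S_k ≤ t} for t ≥ 0. Fix γ > 0 and, for n ≥ 1, let f_n(t) = n^{−γ} N(n^{γ} t) and g_n(t) = inf{s ≥ 0 : f_n(s) = n^{−γ} ⌊n^{γ} t⌋}. Then almost surely, both f_n and g_n converge, as n → ∞, to the identity function uniformly on every compact subset of [0,∞). -/

import Mathlib

open MeasureTheory Filter Set
open scoped ENNReal NNReal Topology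
set_option maxHeartbeats 1000000

section Helpers
open ProbabilityTheory Real
open scoped Topology


lemma fln_det_bound {a : ℕ → ℝ} (hlim : Tendsto (fun k : ℕ => a k / k) atTop (𝓝 1))
    {ε : ℝ} (hε : 0 < ε) : ∃ C : ℝ, 0 ≤ C ∧ ∀ k : ℕ, |a k - k| ≤ ε * k + C := by
  obtain ⟨K, hK⟩ := Metric.tendsto_atTop.mp hlim ε hε
  refine ⟨∑ j ∈ Finset.range (K + 1), |a j - j|,
    Finset.sum_nonneg fun _ _ => abs_nonneg _, fun k => ?_⟩
  rcases lt_or_ge k (K + 1) with hk | hk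
  · have h1 : |a k - k| ≤ ∑ j ∈ Finset.range (K + 1), |a j - j| :=
      Finset.single_le_sum (f := fun j => |a j - (j : ℝ)|) (fun _ _ => abs_nonneg _)
        (Finset.mem_range.mpr hk)
    have h2 : (0 : ℝ) ≤ ε * k := mul_nonneg hε.le (Nat.cast_nonneg k)
    linarith
  · have hk1 : 1 ≤ k := by omega
    have hd := hK k (by omega)
    rw [Real.dist_eq] at hd
    have hkpos : (0 : ℝ) < k := by exact_mod_cast hk1
    have heq : |a k - k| = |a k / k - 1| * k := by
      rw [← abs_of_pos hkpos, ← abs_mul]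
      congr 1
      field_simp
      rw [abs_of_pos hkpos]
      ring
    have hC : (0:ℝ) ≤ ∑ j ∈ Finset.range (K + 1), |a j - j| :=
      Finset.sum_nonneg fun _ _ => abs_nonneg _
    have := mul_le_mul_of_nonneg_right hd.le hkpos.le
    rw [heq]
    linarith

lemma fln_det_atTop {a : ℕ → ℝ} (hlim : Tendsto (fun k : ℕ => a k / k) atTop (𝓝 1)) :
    Tendsto a atTop atTop := by
  have h1 : Tendsto (fun k : ℕ => a k / k * k) atTop atTop :=
    Tendsto.pos_mul_atTop one_pos hlim tendsto_natCast_atTop_atTop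
  refine h1.congr' ?_
  filter_upwards [eventually_ge_atTop 1] with k hk
  have : (k : ℝ) ≠ 0 := by positivity
  field_simp

lemma fln_det_exists_m {a : ℕ → ℝ} (ha0 : a 0 = 0)
    (hinf : Tendsto a atTop atTop) {u : ℝ} (hu : 0 ≤ u) :
    ∃ m : ℕ, a m ≤ u ∧ u < a (m + 1) := by
  classical
  obtain ⟨B, hB⟩ := (hinf.eventually_gt_atTop u).exists_forall_of_atTop
  refine ⟨Nat.findGreatest (fun k => a k ≤ u) B, ?_, ?_⟩
  · have h0 : (fun k => a k ≤ u) 0 := by simpa [ha0] using hu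
    exact Nat.findGreatest_spec (P := fun k => a k ≤ u) (Nat.zero_le B) h0
  · by_contra h
    push_neg at h
    set m := Nat.findGreatest (fun k => a k ≤ u) B with hm
    rcases le_or_gt (m + 1) B with hb | hb
    · exact Nat.findGreatest_is_greatest (P := fun k => a k ≤ u) (Nat.lt_succ_self m) hb h
    · exact absurd (hB (m + 1) (by omega)) (not_lt.mpr h)

lemma fln_det_ncard {a : ℕ → ℝ} (hmono : StrictMono a) {u : ℝ} {m : ℕ}
    (h1 : a m ≤ u) (h2 : u < a (m + 1)) :
    {k : ℕ | 1 ≤ k ∧ a k ≤ u}.ncard = m := by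
  have hset : {k : ℕ | 1 ≤ k ∧ a k ≤ u} = Set.Icc 1 m := by
    ext k
    simp only [Set.mem_setOf_eq, Set.mem_Icc]
    constructor
    · rintro ⟨hk1, hk2⟩
      refine ⟨hk1, ?_⟩
      by_contra hk
      push_neg at hk
      exact absurd (le_trans (hmono.monotone (by omega : m + 1 ≤ k)) hk2) (not_le.mpr h2)
    · rintro ⟨hk1, hk2⟩
      exact ⟨hk1, le_trans (hmono.monotone hk2) h1⟩
  rw [hset, ← Finset.coe_Icc, Set.ncard_coe_finset, Nat.card_Icc]
  omega



lemma fln_map_eq {Ω : Type*} [MeasurableSpace Ω] (P : Measure Ω) [IsProbabilityMeasure P]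
    (X : Ω → ℝ) (hm : Measurable X)
    (hX : ∀ x : ℝ, 0 ≤ x → P {ω | X ω ≤ x} = ENNReal.ofReal (1 - Real.exp (-x))) :
    P.map X = expMeasure 1 := by
  have h1 : IsProbabilityMeasure (P.map X) := Measure.isProbabilityMeasure_map hm.aemeasurable
  have h2 : IsProbabilityMeasure (expMeasure 1) := isProbabilityMeasure_expMeasure one_pos
  refine Measure.ext_of_Iic _ _ fun x => ?_
  rw [Measure.map_apply hm measurableSet_Iic]
  have hpre : X ⁻¹' Iic x = {ω | X ω ≤ x} := rfl
  have hrhs : expMeasure 1 (Iic x)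
      = ENNReal.ofReal (if 0 ≤ x then 1 - Real.exp (-(1 * x)) else 0) := by
    rw [← ofReal_cdf]
    congr 1
    exact cdf_expMeasure_eq one_pos x
  rw [hpre, hrhs]
  rcases le_or_gt 0 x with hx | hx
  · rw [if_pos hx, one_mul, hX x hx]
  · rw [if_neg (not_le.mpr hx), ENNReal.ofReal_zero]
    have h0 : P {ω | X ω ≤ 0} = 0 := by
      rw [hX 0 le_rfl]; simp
    have : P {ω | X ω ≤ x} ≤ P {ω | X ω ≤ 0} :=
      measure_mono fun ω hω => le_trans hω hx.le
    simpa [h0] using this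

lemma fln_ae_nonneg : ∀ᵐ x ∂(expMeasure 1), 0 ≤ x := by
  rw [ae_iff]
  have : {x : ℝ | ¬ 0 ≤ x} = Iio 0 := by ext x; simp
  rw [this]
  rw [show expMeasure 1 = volume.withDensity (exponentialPDF 1) from rfl,
    withDensity_apply _ measurableSet_Iio]
  exact lintegral_exponentialPDF_of_nonpos le_rfl

lemma fln_lintegral : ∫⁻ x, ENNReal.ofReal x ∂(expMeasure 1) = 1 := by
  have hmeas : Measurable (exponentialPDF 1) :=
    (measurable_exponentialPDFReal 1).ennreal_ofReal
  rw [show expMeasure 1 = volume.withDensity (exponentialPDF 1) from rfl,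
    lintegral_withDensity_eq_lintegral_mul _ hmeas (by fun_prop)]
  have hpt : ∀ x : ℝ, (exponentialPDF 1 * fun x => ENNReal.ofReal x) x
      = (Ioi (0:ℝ)).indicator (fun x => ENNReal.ofReal (rexp (-x) * x ^ ((2:ℝ) - 1))) x := by
    intro x
    simp only [Pi.mul_apply]
    rcases lt_trichotomy x 0 with h | h | h
    · rw [exponentialPDF_of_neg h, zero_mul, Set.indicator_of_notMem (by simpa using h.le)]
    · subst h
      simp [Set.indicator_of_notMem]
    · rw [Set.indicator_of_mem (mem_Ioi.mpr h), exponentialPDF_of_nonneg h.le,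
        ← ENNReal.ofReal_mul (by positivity)]
      congr 1
      rw [show (2:ℝ) - 1 = 1 by norm_num, Real.rpow_one]
      ring
  rw [lintegral_congr hpt, lintegral_indicator measurableSet_Ioi]
  have hInt : IntegrableOn (fun x : ℝ => rexp (-x) * x ^ ((2:ℝ) - 1)) (Ioi 0) :=
    Real.GammaIntegral_convergent two_pos
  have hnn : ∀ᵐ x ∂(volume.restrict (Ioi (0:ℝ))), 0 ≤ rexp (-x) * x ^ ((2:ℝ) - 1) := by
    filter_upwards [ae_restrict_mem measurableSet_Ioi] with x hx
    have : (0:ℝ) < x := hx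
    positivity
  rw [← ofReal_integral_eq_lintegral_ofReal hInt hnn, ← Real.Gamma_eq_integral two_pos]
  have : Real.Gamma 2 = 1 := by
    have h := Real.Gamma_nat_eq_factorial 1
    norm_num at h
    convert h using 2
    norm_num
  rw [this, ENNReal.ofReal_one]

lemma fln_integrable_id : Integrable (fun x : ℝ => x) (expMeasure 1) := by
  refine ⟨aestronglyMeasurable_id, ?_⟩
  rw [hasFiniteIntegral_iff_norm]
  have : ∫⁻ x, ENNReal.ofReal ‖x‖ ∂(expMeasure 1) = ∫⁻ x, ENNReal.ofReal x ∂(expMeasure 1) := by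
    refine lintegral_congr_ae ?_
    filter_upwards [fln_ae_nonneg] with x hx
    rw [Real.norm_eq_abs, abs_of_nonneg hx]
  rw [this, fln_lintegral]
  exact ENNReal.one_lt_top

lemma fln_mean : ∫ x, x ∂(expMeasure 1) = 1 := by
  rw [integral_eq_lintegral_of_nonneg_ae fln_ae_nonneg aestronglyMeasurable_id, fln_lintegral]
  simp


end Helpers

theorem poisson_process_time_changes_tendsto_id
    {Ω : Type*} [MeasurableSpace Ω] (P : Measure Ω) [IsProbabilityMeasure P]
    (E : ℕ → Ω → ℝ)
    (hE_meas : ∀ i, Measurable (E i))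
    (hE_indep : ProbabilityTheory.iIndepFun E P)
    (hE_exp : ∀ i, ∀ x : ℝ, 0 ≤ x →
      P {ω | E i ω ≤ x} = ENNReal.ofReal (1 - Real.exp (-x)))
    (S : ℕ → Ω → ℝ) (hS : ∀ k ω, S k ω = ∑ i ∈ Finset.range k, E i ω)
    (N : ℝ → Ω → ℕ) (hN : ∀ t ω, N t ω = Set.ncard {k : ℕ | 1 ≤ k ∧ S k ω ≤ t})
    (γ : ℝ) (hγ : 0 < γ)
    (fseq : ℕ → Ω → ℝ → ℝ)
    (hf : ∀ n ω t, fseq n ω t = ((n : ℝ) ^ γ)⁻¹ * N ((n : ℝ) ^ γ * t) ω)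
    (gseq : ℕ → Ω → ℝ → ℝ)
    (hg : ∀ n ω t, gseq n ω t =
      sInf {s : ℝ | 0 ≤ s ∧ fseq n ω s = ((n : ℝ) ^ γ)⁻¹ * (⌊(n : ℝ) ^ γ * t⌋ : ℝ)}) :
    ∀ᵐ ω ∂P, ∀ T : ℝ, 0 < T →
      TendstoUniformlyOn (fun n t => fseq n ω t) id atTop (Set.Icc 0 T) ∧
      TendstoUniformlyOn (fun n t => gseq n ω t) id atTop (Set.Icc 0 T) := by
  classical
  have hmap : ∀ i, P.map (E i) = ProbabilityTheory.expMeasure 1 :=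
    fun i => fln_map_eq P (E i) (hE_meas i) (hE_exp i)
  have hint0 : Integrable (E 0) P := by
    have h := fln_integrable_id
    rw [← hmap 0] at h
    exact (integrable_map_measure aestronglyMeasurable_id (hE_meas 0).aemeasurable).mp h
  have hEmean : ∫ ω, E 0 ω ∂P = 1 := by
    have h2 : ∫ x, x ∂(P.map (E 0)) = ∫ ω, E 0 ω ∂P :=
      integral_map (hE_meas 0).aemeasurable
        (Measurable.aestronglyMeasurable (f := fun x : ℝ => x) measurable_id)
    rw [← h2, hmap 0]
    exact fln_mean
  have hident : ∀ i, ProbabilityTheory.IdentDistrib (E i) (E 0) P P := fun i =>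
    ⟨(hE_meas i).aemeasurable, (hE_meas 0).aemeasurable, by rw [hmap i, hmap 0]⟩
  have hpair : Pairwise (Function.onFun (ProbabilityTheory.IndepFun · · P) E) :=
    fun i j hij => hE_indep.indepFun hij
  have hslln := ProbabilityTheory.strong_law_ae_real E hint0 hpair hident
  rw [hEmean] at hslln
  have hpos : ∀ᵐ ω ∂P, ∀ i, 0 < E i ω := by
    rw [ae_all_iff]
    intro i
    have h0 : P {ω | E i ω ≤ 0} = 0 := by rw [hE_exp i 0 le_rfl]; simp
    rw [ae_iff]
    have hs : {ω | ¬ 0 < E i ω} = {ω | E i ω ≤ 0} := by ext ω; simp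
    rw [hs]
    exact h0
  filter_upwards [hslln, hpos] with ω hω hωpos
  intro T hT
  have ha0 : S 0 ω = 0 := by rw [hS]; simp
  have hmono : StrictMono (fun k => S k ω) := strictMono_nat_of_lt_succ fun k => by
    simp only [hS, Finset.sum_range_succ]
    have := hωpos k
    linarith
  have hlim : Tendsto (fun k : ℕ => S k ω / k) atTop (𝓝 1) :=
    hω.congr fun k => by rw [hS]
  have hinf : Tendsto (fun k => S k ω) atTop atTop := fln_det_atTop hlim
  have hNval : ∀ u : ℝ, ∀ m : ℕ, S m ω ≤ u → u < S (m + 1) ω → N u ω = m := by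
    intro u m h1 h2
    rw [hN]
    exact fln_det_ncard hmono h1 h2
  have hEx : ∀ u : ℝ, 0 ≤ u → ∃ m : ℕ, S m ω ≤ u ∧ u < S (m + 1) ω :=
    fun u hu => fln_det_exists_m ha0 hinf hu
  have hc_tendsto : Tendsto (fun n : ℕ => (n : ℝ) ^ γ) atTop atTop :=
    (tendsto_rpow_atTop hγ).comp tendsto_natCast_atTop_atTop
  -- value of gseq
  have hgval : ∀ n : ℕ, 1 ≤ n → ∀ t : ℝ, 0 ≤ t →
      gseq n ω t = ((n : ℝ) ^ γ)⁻¹ * S ⌊(n : ℝ) ^ γ * t⌋₊ ω := by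
    intro n hn t ht
    have hnpos : (0 : ℝ) < n := by exact_mod_cast hn
    have hcpos : (0 : ℝ) < (n : ℝ) ^ γ := Real.rpow_pos_of_pos hnpos γ
    have hct0 : 0 ≤ (n : ℝ) ^ γ * t := mul_nonneg hcpos.le ht
    have hfloor : ((⌊(n : ℝ) ^ γ * t⌋ : ℤ) : ℝ) = ((⌊(n : ℝ) ^ γ * t⌋₊ : ℕ) : ℝ) :=
      (natCast_floor_eq_intCast_floor hct0).symm
    have hS0 : 0 ≤ S ⌊(n : ℝ) ^ γ * t⌋₊ ω := by
      have h := hmono.monotone (Nat.zero_le ⌊(n : ℝ) ^ γ * t⌋₊)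
      simpa [ha0] using h
    have hset : {s : ℝ | 0 ≤ s ∧ fseq n ω s = ((n : ℝ) ^ γ)⁻¹ * ((⌊(n : ℝ) ^ γ * t⌋ : ℤ) : ℝ)}
        = Ico (((n : ℝ) ^ γ)⁻¹ * S ⌊(n : ℝ) ^ γ * t⌋₊ ω)
            (((n : ℝ) ^ γ)⁻¹ * S (⌊(n : ℝ) ^ γ * t⌋₊ + 1) ω) := by
      ext s
      simp only [mem_setOf_eq, mem_Ico]
      constructor
      · rintro ⟨hs0, hfs⟩
        rw [hf, hfloor] at hfs
        have hNs : N ((n : ℝ) ^ γ * s) ω = ⌊(n : ℝ) ^ γ * t⌋₊ := by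
          have := mul_left_cancel₀ (inv_ne_zero hcpos.ne') hfs
          exact_mod_cast this
        obtain ⟨m', hm1, hm2⟩ := hEx ((n : ℝ) ^ γ * s) (mul_nonneg hcpos.le hs0)
        have hmm : m' = ⌊(n : ℝ) ^ γ * t⌋₊ := by rw [← hNval _ _ hm1 hm2, hNs]
        rw [hmm] at hm1 hm2
        constructor
        · rw [inv_mul_eq_div, div_le_iff₀ hcpos]
          linarith [hm1, mul_comm s ((n : ℝ) ^ γ)]
        · rw [inv_mul_eq_div, lt_div_iff₀ hcpos]
          linarith [hm2, mul_comm s ((n : ℝ) ^ γ)]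
      · rintro ⟨h1, h2⟩
        rw [inv_mul_eq_div, div_le_iff₀ hcpos] at h1
        rw [inv_mul_eq_div, lt_div_iff₀ hcpos] at h2
        have hs0 : 0 ≤ s := by
          by_contra hneg
          push_neg at hneg
          nlinarith [hS0, h1]
        have hNs : N ((n : ℝ) ^ γ * s) ω = ⌊(n : ℝ) ^ γ * t⌋₊ :=
          hNval _ _ (by linarith [mul_comm s ((n : ℝ) ^ γ)])
            (by linarith [mul_comm s ((n : ℝ) ^ γ)])
        refine ⟨hs0, ?_⟩
        rw [hf, hNs, hfloor]
    rw [hg, hset]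
    exact csInf_Ico (by
      have := hmono (Nat.lt_succ_self ⌊(n : ℝ) ^ γ * t⌋₊)
      exact mul_lt_mul_of_pos_left this (inv_pos.mpr hcpos))
  -- the key quantitative estimate
  have key : ∀ ε : ℝ, 0 < ε → ∀ᶠ n : ℕ in atTop, ∀ t ∈ Icc (0:ℝ) T,
      |t - fseq n ω t| < ε ∧ |t - gseq n ω t| < ε := by
    intro ε hε
    obtain ⟨ε₁, hε₁pos, hε₁half, hε₁T⟩ : ∃ ε₁ : ℝ, 0 < ε₁ ∧ ε₁ ≤ 1/2 ∧ ε₁ * T ≤ ε/4 := by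
      refine ⟨min (ε/(4*(T+1))) (1/2), lt_min (by positivity) (by norm_num),
        min_le_right _ _, ?_⟩
      calc min (ε/(4*(T+1))) (1/2) * T ≤ ε/(4*(T+1)) * T :=
            mul_le_mul_of_nonneg_right (min_le_left _ _) hT.le
        _ ≤ ε/4 := by
            rw [div_mul_eq_mul_div, div_le_div_iff₀ (by linarith) (by norm_num)]
            nlinarith
    obtain ⟨C, hC0, hC⟩ := fln_det_bound hlim hε₁pos
    filter_upwards [eventually_ge_atTop 1,
      hc_tendsto.eventually_ge_atTop (2*(2*ε₁*C + C + 1 + ε₁ + C + 1)/ε)] with n hn hcn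
    have hnpos : (0 : ℝ) < n := by exact_mod_cast hn
    have hcpos : (0 : ℝ) < (n : ℝ) ^ γ := Real.rpow_pos_of_pos hnpos γ
    have hεc : 2*(2*ε₁*C + C + 1 + ε₁ + C + 1) ≤ ε * (n : ℝ) ^ γ := by
      rw [div_le_iff₀ hε] at hcn
      linarith [hcn]
    intro t ht
    obtain ⟨ht0, htT⟩ := ht
    have hct : (n : ℝ) ^ γ * t ≤ (n : ℝ) ^ γ * T := mul_le_mul_of_nonneg_left htT hcpos.le
    have hct0 : 0 ≤ (n : ℝ) ^ γ * t := mul_nonneg hcpos.le ht0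
    have hεT : ε₁ * ((n : ℝ) ^ γ * t) ≤ (ε/4) * (n : ℝ) ^ γ := by
      have h1 : ε₁ * ((n : ℝ) ^ γ * t) ≤ ε₁ * ((n : ℝ) ^ γ * T) :=
        mul_le_mul_of_nonneg_left hct hε₁pos.le
      have h3 : (ε₁ * T) * (n : ℝ) ^ γ ≤ (ε/4) * (n : ℝ) ^ γ :=
        mul_le_mul_of_nonneg_right hε₁T hcpos.le
      nlinarith
    constructor
    · -- f part
      obtain ⟨m, h1, h2⟩ := hEx ((n : ℝ) ^ γ * t) hct0
      have hfseq : fseq n ω t = ((n : ℝ) ^ γ)⁻¹ * m := by rw [hf, hNval _ _ h1 h2]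
      have hb1 := abs_le.mp (hC m)
      have hb2 := abs_le.mp (hC (m + 1))
      push_cast at hb2
      have hM0 : (0 : ℝ) ≤ m := Nat.cast_nonneg m
      have hMle : (m : ℝ) ≤ 2 * ((n : ℝ) ^ γ * t) + 2 * C := by
        nlinarith [hb1.1, hb1.2, mul_le_mul_of_nonneg_right hε₁half hM0]
      have hεM : ε₁ * (m : ℝ) ≤ ε₁ * (2 * ((n : ℝ) ^ γ * t) + 2 * C) :=
        mul_le_mul_of_nonneg_left hMle hε₁pos.le
      have hεM1 : ε₁ * ((m : ℝ) + 1) ≤ ε₁ * (2 * ((n : ℝ) ^ γ * t) + 2 * C + 1) :=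
        mul_le_mul_of_nonneg_left (by linarith) hε₁pos.le
      have habs : |(n : ℝ) ^ γ * t - m| ≤ 2 * (ε₁ * ((n : ℝ) ^ γ * t)) + (2*ε₁*C + C + 1 + ε₁) := by
        rw [abs_le]
        constructor
        · nlinarith [hb1.2, hεM]
        · nlinarith [hb2.1, hεM1]
      have hfinal : |(n : ℝ) ^ γ * t - m| < ε * (n : ℝ) ^ γ := by linarith [hεT, habs, hεc]
      rw [hfseq]
      have heq : t - ((n : ℝ) ^ γ)⁻¹ * m = ((n : ℝ) ^ γ * t - m) / ((n : ℝ) ^ γ) := by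
        field_simp
      rw [heq, abs_div, abs_of_pos hcpos, div_lt_iff₀ hcpos]
      linarith [hfinal]
    · -- g part
      rw [hgval n hn t ht0]
      have hfl1 : ((⌊(n : ℝ) ^ γ * t⌋₊ : ℕ) : ℝ) ≤ (n : ℝ) ^ γ * t := Nat.floor_le hct0
      have hfl2 : (n : ℝ) ^ γ * t < (⌊(n : ℝ) ^ γ * t⌋₊ : ℝ) + 1 := Nat.lt_floor_add_one _
      have hb := abs_le.mp (hC ⌊(n : ℝ) ^ γ * t⌋₊)
      have hεm : ε₁ * ((⌊(n : ℝ) ^ γ * t⌋₊ : ℕ) : ℝ) ≤ ε₁ * ((n : ℝ) ^ γ * t) :=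
        mul_le_mul_of_nonneg_left hfl1 hε₁pos.le
      have habs : |(n : ℝ) ^ γ * t - S ⌊(n : ℝ) ^ γ * t⌋₊ ω| ≤ 1 + ε₁ * ((n : ℝ) ^ γ * t) + C := by
        rw [abs_le]
        constructor
        · nlinarith [hb.1, hb.2]
        · nlinarith [hb.1, hb.2]
      have hfinal : |(n : ℝ) ^ γ * t - S ⌊(n : ℝ) ^ γ * t⌋₊ ω| < ε * (n : ℝ) ^ γ := by
        nlinarith [habs, hεT, hεc, mul_nonneg hε.le hcpos.le, mul_nonneg (mul_nonneg hε₁pos.le hC0) hcpos.le]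
      have heq : t - ((n : ℝ) ^ γ)⁻¹ * S ⌊(n : ℝ) ^ γ * t⌋₊ ω
          = ((n : ℝ) ^ γ * t - S ⌊(n : ℝ) ^ γ * t⌋₊ ω) / ((n : ℝ) ^ γ) := by
        field_simp
      rw [heq, abs_div, abs_of_pos hcpos, div_lt_iff₀ hcpos]
      linarith [hfinal]
  constructor
  · rw [Metric.tendstoUniformlyOn_iff]
    intro ε hε
    filter_upwards [key ε hε] with n hn t ht
    rw [Real.dist_eq]
    simpa using (hn t ht).1
  · rw [Metric.tendstoUniformlyOn_iff]
    intro ε hε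
    filter_upwards [key ε hε] with n hn t ht
    rw [Real.dist_eq]
    simpa using (hn t ht).2
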